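/- Let V : Δ(Ω) → ℝ be bounded, continuous and concave and satisfy the dynamic programming equation. Let p ∈ J, let q_I, q_J ∈ Δ(Ω) and a_I, a_J > 0 with a_I + a_J = 1 and p = a_I q_I + a_J q_J, and suppose the two-point measure a_I·δ_{q_I} + a_J·δ_{q_J} ∈ S(p) attains the supremum in the dynamic programming equation at p. Then: (1) V is affine on the segment [q_I, q_J], i.e. V(t·q_I + (1−t)·q_J) = t·V(q_I) + (1−t)·V(q_J) for all t ∈ [0,1]; and (2) for every p′ = a′_I q_I + a′_J q_J with a′_I, a′_J ≥ 0 and a′_I + a′_J = 1, the measure a′_I·δ_{q_I} + a′_J·δ_{q_J} attains the supremum in the dynamic programming equation at p′. -/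

import Mathlib

open MeasureTheory Set

noncomputable section

variable {Ω : Type*}

/-- The investment region `I = {p ∈ Δ(Ω) : ⟨p,r⟩ ≥ 0}`. -/
def invest [Fintype Ω] (r : Ω → ℝ) : Set (Ω → ℝ) :=
  {p | p ∈ stdSimplex ℝ Ω ∧ 0 ≤ ∑ ω, p ω * r ω}

/-- The set `S(p)` of splittings at `p`: Borel probability measures on `ℝ^Ω` carried by the
simplex `Δ(Ω)` with barycenter `p`. -/
def Splittings [Fintype Ω] (p : Ω → ℝ) : Set (Measure (Ω → ℝ)) :=
  {μ | IsProbabilityMeasure μ ∧ μ (stdSimplex ℝ Ω) = 1 ∧ ∫ q, q ∂μ = p}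

/-- The payoff `(1−δ)·μ(I) + δ·∫ V(φ(q)) dμ(q)` appearing in the dynamic programming
equation. -/
def dppPayoff [Fintype Ω] (r : Ω → ℝ) (δ : ℝ) (φ : (Ω → ℝ) → Ω → ℝ)
    (V : (Ω → ℝ) → ℝ) (μ : Measure (Ω → ℝ)) : ℝ :=
  (1 - δ) * (μ (invest r)).toReal + δ * ∫ q in stdSimplex ℝ Ω, V (φ q) ∂μ

/-- `V` satisfies the dynamic programming equation
`V(p) = sup_{μ ∈ S(p)} [(1−δ)·μ(I) + δ·∫ V(φ(q)) dμ(q)]` on the simplex. -/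
def SatisfiesDPP [Fintype Ω] (r : Ω → ℝ) (δ : ℝ) (φ : (Ω → ℝ) → Ω → ℝ)
    (V : (Ω → ℝ) → ℝ) : Prop :=
  ∀ p ∈ stdSimplex ℝ Ω, V p = sSup (dppPayoff r δ φ V '' Splittings p)

/-- The two-point splitting `a·δ_{q₁} + (1−a)·δ_{q₂}`. -/
def twoPoint [Fintype Ω] (a : ℝ) (q₁ q₂ : Ω → ℝ) : Measure (Ω → ℝ) :=
  ENNReal.ofReal a • Measure.dirac q₁ + ENNReal.ofReal (1 - a) • Measure.dirac q₂

namespace OptTwoPointAux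

open scoped ENNReal Classical

variable [Fintype Ω]

lemma integrable_smul_dirac {E : Type*} [NormedAddCommGroup E]
    {a : ℝ≥0∞} (ha : a ≠ ⊤) (x : Ω → ℝ) (f : (Ω → ℝ) → E) :
    Integrable f (a • Measure.dirac x) := by
  have hx : Integrable f (Measure.dirac x) := by
    refine (integrable_const (f x)).congr ?_
    rw [Filter.EventuallyEq, ae_dirac_eq]
    exact Filter.eventually_pure.mpr rfl
  exact hx.smul_measure ha

lemma integral_two {E : Type*} [NormedAddCommGroup E] [NormedSpace ℝ E] [CompleteSpace E]
    (a b : ℝ) (x y : Ω → ℝ) (f : (Ω → ℝ) → E) :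
    ∫ q, f q ∂(ENNReal.ofReal a • Measure.dirac x + ENNReal.ofReal b • Measure.dirac y)
      = (ENNReal.ofReal a).toReal • f x + (ENNReal.ofReal b).toReal • f y := by
  rw [integral_add_measure
      ((integrable_smul_dirac ENNReal.ofReal_ne_top x f))
      ((integrable_smul_dirac ENNReal.ofReal_ne_top y f)),
    integral_smul_measure, integral_smul_measure, integral_dirac, integral_dirac]


lemma measurableSet_simplex : MeasurableSet (stdSimplex ℝ Ω) :=
  (isClosed_stdSimplex ℝ Ω).measurableSet

lemma measurableSet_invest (r : Ω → ℝ) : MeasurableSet (invest r) := by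
  have : invest r = stdSimplex ℝ Ω ∩ {p | 0 ≤ ∑ ω, p ω * r ω} := rfl
  rw [this]
  refine measurableSet_simplex.inter (measurableSet_le measurable_const ?_)
  exact Finset.measurable_sum _ fun ω _ => by fun_prop

lemma twoPoint_apply (a : ℝ) (ha : 0 ≤ a) (ha1 : a ≤ 1) (qi qj : Ω → ℝ)
    {s : Set (Ω → ℝ)} (hs : MeasurableSet s) :
    ((twoPoint a qi qj) s).toReal
      = a * (if qi ∈ s then 1 else 0) + (1 - a) * (if qj ∈ s then 1 else 0) := by
  classical
  rw [twoPoint, Measure.add_apply, Measure.smul_apply, Measure.smul_apply,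
    Measure.dirac_apply' _ hs, Measure.dirac_apply' _ hs,
    Set.indicator_apply, Set.indicator_apply]
  by_cases hi : qi ∈ s <;> by_cases hj : qj ∈ s <;>
      simp only [hi, hj, if_true, if_false, Pi.one_apply, smul_eq_mul, mul_one, mul_zero,
        add_zero, zero_add]
  · rw [← ENNReal.ofReal_add ha (by linarith), ENNReal.toReal_ofReal (by linarith)]
  · rw [ENNReal.toReal_ofReal ha]
  · rw [ENNReal.toReal_ofReal (by linarith)]
  · simp

lemma twoPoint_restrict (a : ℝ) {qi qj : Ω → ℝ} (hqi : qi ∈ stdSimplex ℝ Ω)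
    (hqj : qj ∈ stdSimplex ℝ Ω) :
    (twoPoint a qi qj).restrict (stdSimplex ℝ Ω) = twoPoint a qi qj := by
  classical
  rw [twoPoint, Measure.restrict_add, Measure.restrict_smul, Measure.restrict_smul,
    restrict_dirac' measurableSet_simplex, restrict_dirac' measurableSet_simplex,
    if_pos hqi, if_pos hqj]

lemma twoPoint_mem_splittings (a : ℝ) (ha : 0 ≤ a) (ha1 : a ≤ 1)
    {qi qj : Ω → ℝ} (hqi : qi ∈ stdSimplex ℝ Ω) (hqj : qj ∈ stdSimplex ℝ Ω) :
    twoPoint a qi qj ∈ Splittings (a • qi + (1 - a) • qj) := by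
  have h1 : (0:ℝ) ≤ 1 - a := by linarith
  refine ⟨⟨?_⟩, ?_, ?_⟩
  · rw [twoPoint, Measure.add_apply, Measure.smul_apply, Measure.smul_apply,
      Measure.dirac_apply_of_mem (mem_univ qi), Measure.dirac_apply_of_mem (mem_univ qj),
      smul_eq_mul, smul_eq_mul, mul_one, mul_one, ← ENNReal.ofReal_add ha h1]
    norm_num
  · rw [twoPoint, Measure.add_apply, Measure.smul_apply, Measure.smul_apply,
      Measure.dirac_apply_of_mem hqi, Measure.dirac_apply_of_mem hqj,
      smul_eq_mul, smul_eq_mul, mul_one, mul_one, ← ENNReal.ofReal_add ha h1]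
    norm_num
  · rw [twoPoint, integral_two]
    rw [ENNReal.toReal_ofReal ha, ENNReal.toReal_ofReal h1]

lemma dppPayoff_twoPoint (r : Ω → ℝ) (δ : ℝ) (φ : (Ω → ℝ) → Ω → ℝ) (V : (Ω → ℝ) → ℝ)
    (a : ℝ) (ha : 0 ≤ a) (ha1 : a ≤ 1)
    {qi qj : Ω → ℝ} (hqi : qi ∈ stdSimplex ℝ Ω) (hqj : qj ∈ stdSimplex ℝ Ω) :
    dppPayoff r δ φ V (twoPoint a qi qj)
      = a * ((1 - δ) * (if qi ∈ invest r then 1 else 0) + δ * V (φ qi))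
        + (1 - a) * ((1 - δ) * (if qj ∈ invest r then 1 else 0) + δ * V (φ qj)) := by
  classical
  have hint : ∫ q in stdSimplex ℝ Ω, V (φ q) ∂(twoPoint a qi qj)
      = a * V (φ qi) + (1 - a) * V (φ qj) := by
    rw [twoPoint_restrict a hqi hqj, twoPoint, integral_two,
      ENNReal.toReal_ofReal ha, ENNReal.toReal_ofReal (by linarith : (0:ℝ) ≤ 1 - a),
      smul_eq_mul, smul_eq_mul]
  rw [dppPayoff, twoPoint_apply a ha ha1 qi qj (measurableSet_invest r), hint]
  ring

end OptTwoPointAux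

/-- if an optimal splitting at `p ∈ J` is a two-point splitting between `q_I`
and `q_J` with positive weights, then (1) `V` is affine on the segment `[q_I, q_J]`, and
(2) at every point `p′` of this segment, the corresponding two-point splitting between
`q_I` and `q_J` attains the supremum in the dynamic programming equation. -/
theorem optimal_two_point_splitting [Fintype Ω] [Nonempty Ω]
    (r : Ω → ℝ) (δ : ℝ) (hδ : δ ∈ Ico (0 : ℝ) 1)
    (φ : (Ω → ℝ) → Ω → ℝ)
    (hφmaps : MapsTo φ (stdSimplex ℝ Ω) (stdSimplex ℝ Ω))
    (hφcont : ContinuousOn φ (stdSimplex ℝ Ω))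
    (hφaff : ∀ x ∈ stdSimplex ℝ Ω, ∀ y ∈ stdSimplex ℝ Ω, ∀ t ∈ Icc (0 : ℝ) 1,
      φ (t • x + (1 - t) • y) = t • φ x + (1 - t) • φ y)
    (V : (Ω → ℝ) → ℝ)
    (hVb : ∃ C, ∀ p ∈ stdSimplex ℝ Ω, |V p| ≤ C)
    (hVcont : ContinuousOn V (stdSimplex ℝ Ω))
    (hVconc : ConcaveOn ℝ (stdSimplex ℝ Ω) V)
    (hV : SatisfiesDPP r δ φ V)
    (p : Ω → ℝ) (hp : p ∈ stdSimplex ℝ Ω) (hpJ : p ∉ invest r)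
    (qi qj : Ω → ℝ) (hqi : qi ∈ stdSimplex ℝ Ω) (hqj : qj ∈ stdSimplex ℝ Ω)
    (ai aj : ℝ) (hai : 0 < ai) (haj : 0 < aj) (hsum : ai + aj = 1)
    (hdecomp : p = ai • qi + aj • qj)
    (hmem : twoPoint ai qi qj ∈ Splittings p)
    (hopt : dppPayoff r δ φ V (twoPoint ai qi qj) = V p) :
    (∀ t ∈ Icc (0 : ℝ) 1,
      V (t • qi + (1 - t) • qj) = t * V qi + (1 - t) * V qj) ∧
    (∀ ai' aj' : ℝ, 0 ≤ ai' → 0 ≤ aj' → ai' + aj' = 1 →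
      twoPoint ai' qi qj ∈ Splittings (ai' • qi + aj' • qj) ∧
      dppPayoff r δ φ V (twoPoint ai' qi qj) = V (ai' • qi + aj' • qj)) := by
  classical
  obtain ⟨hδ0, hδ1⟩ := hδ
  obtain ⟨C, hC⟩ := hVb
  have hCnn : (0:ℝ) ≤ C := le_trans (abs_nonneg _) (hC _ hqi)
  set ci : ℝ := (1 - δ) * (if qi ∈ invest r then 1 else 0) + δ * V (φ qi) with hci
  set cj : ℝ := (1 - δ) * (if qj ∈ invest r then 1 else 0) + δ * V (φ qj) with hcj
  have haj' : aj = 1 - ai := by linarith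
  have hai1 : ai ≤ 1 := by linarith
  have hpay : ∀ a : ℝ, 0 ≤ a → a ≤ 1 →
      dppPayoff r δ φ V (twoPoint a qi qj) = a * ci + (1 - a) * cj := fun a ha ha1 =>
    OptTwoPointAux.dppPayoff_twoPoint r δ φ V a ha ha1 hqi hqj
  have hmem' : ∀ a : ℝ, 0 ≤ a → a ≤ 1 →
      twoPoint a qi qj ∈ Splittings (a • qi + (1 - a) • qj) := fun a ha ha1 =>
    OptTwoPointAux.twoPoint_mem_splittings a ha ha1 hqi hqj
  have hseg : ∀ t : ℝ, 0 ≤ t → t ≤ 1 → t • qi + (1 - t) • qj ∈ stdSimplex ℝ Ω :=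
    fun t h0 h1 => (convex_stdSimplex ℝ Ω) hqi hqj h0 (by linarith) (by ring)
  -- boundedness of the payoff over splittings
  have hbdd : ∀ p' : Ω → ℝ, BddAbove (dppPayoff r δ φ V '' Splittings p') := by
    intro p'
    refine ⟨(1 - δ) + δ * C, ?_⟩
    rintro x ⟨μ, ⟨hμprob, hμS, -⟩, rfl⟩
    haveI := hμprob
    have h1 : (μ (invest r)).toReal ≤ 1 := by
      have h := ENNReal.toReal_mono ENNReal.one_ne_top (prob_le_one (μ := μ) (s := invest r))
      simpa using h
    have h2 : ∫ q in stdSimplex ℝ Ω, V (φ q) ∂μ ≤ C := by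
      have hae : ∀ᵐ x ∂μ.restrict (stdSimplex ℝ Ω), ‖V (φ x)‖ ≤ C := by
        refine (ae_restrict_iff' OptTwoPointAux.measurableSet_simplex).mpr
          (ae_of_all _ fun x hx => ?_)
        rw [Real.norm_eq_abs]
        exact hC _ (hφmaps hx)
      have := norm_integral_le_of_norm_le_const (μ := μ.restrict (stdSimplex ℝ Ω))
        (f := fun q => V (φ q)) hae
      rw [Real.norm_eq_abs] at this
      have hle : (μ.restrict (stdSimplex ℝ Ω) univ).toReal ≤ 1 := by
        rw [Measure.restrict_apply_univ]
        have h := ENNReal.toReal_mono ENNReal.one_ne_top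
          (prob_le_one (μ := μ) (s := stdSimplex ℝ Ω))
        simpa using h
      calc ∫ q in stdSimplex ℝ Ω, V (φ q) ∂μ
          ≤ |∫ q in stdSimplex ℝ Ω, V (φ q) ∂μ| := le_abs_self _
        _ ≤ C * (μ.restrict (stdSimplex ℝ Ω) univ).toReal := this
        _ ≤ C * 1 := mul_le_mul_of_nonneg_left hle hCnn
        _ = C := mul_one C
    rw [dppPayoff]
    have hδ1' : (0:ℝ) ≤ 1 - δ := by linarith
    have := mul_le_mul_of_nonneg_left h1 hδ1'
    have := mul_le_mul_of_nonneg_left h2 hδ0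
    linarith
  -- lower bound along the segment
  have hlow : ∀ t : ℝ, 0 ≤ t → t ≤ 1 →
      t * ci + (1 - t) * cj ≤ V (t • qi + (1 - t) • qj) := by
    intro t h0 h1
    rw [hV _ (hseg t h0 h1)]
    exact le_csSup (hbdd _) ⟨_, hmem' t h0 h1, hpay t h0 h1⟩
  have hqi_ge : ci ≤ V qi := by
    have h := hlow 1 zero_le_one le_rfl
    simpa using h
  have hqj_ge : cj ≤ V qj := by
    have h := hlow 0 le_rfl zero_le_one
    simpa using h
  have hVp : V p = ai * ci + aj * cj := by
    rw [← hopt, hpay ai hai.le hai1, haj']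
  have hconcp : ai * V qi + aj * V qj ≤ V p := by
    have h := hVconc.2 hqi hqj hai.le haj.le hsum
    rwa [smul_eq_mul, smul_eq_mul, ← hdecomp] at h
  have h0i : ai * (V qi - ci) = 0 := by
    nlinarith [mul_nonneg hai.le (sub_nonneg.mpr hqi_ge),
      mul_nonneg haj.le (sub_nonneg.mpr hqj_ge)]
  have h0j : aj * (V qj - cj) = 0 := by
    nlinarith [mul_nonneg hai.le (sub_nonneg.mpr hqi_ge),
      mul_nonneg haj.le (sub_nonneg.mpr hqj_ge)]
  have hVqi : V qi = ci := by
    rcases mul_eq_zero.mp h0i with h | h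
    · exact absurd h (ne_of_gt hai)
    · linarith
  have hVqj : V qj = cj := by
    rcases mul_eq_zero.mp h0j with h | h
    · exact absurd h (ne_of_gt haj)
    · linarith
  have hVp' : V p = ai * V qi + aj * V qj := by rw [hVqi, hVqj]; exact hVp
  -- upper bound along the segment, via concavity
  have hupp : ∀ t : ℝ, 0 ≤ t → t ≤ 1 →
      V (t • qi + (1 - t) • qj) ≤ t * V qi + (1 - t) * V qj := by
    intro t ht0 ht1
    have hptS := hseg t ht0 ht1
    rcases le_total ai t with hle | hle
    · have ht_pos : 0 < t := lt_of_lt_of_le hai hle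
      set c := ai / t with hc
      have hc0 : 0 < c := div_pos hai ht_pos
      have hc1 : c ≤ 1 := (div_le_one ht_pos).mpr hle
      have hct : c * t = ai := div_mul_cancel₀ ai (ne_of_gt ht_pos)
      have hpe : c • (t • qi + (1 - t) • qj) + (1 - c) • qj = p := by
        rw [hdecomp]; funext ω
        simp only [Pi.add_apply, Pi.smul_apply, smul_eq_mul]
        linear_combination (qi ω - qj ω) * hct - qj ω * hsum
      have hcc := hVconc.2 hptS hqj hc0.le (by linarith : (0:ℝ) ≤ 1 - c) (by ring)
      rw [hpe] at hcc
      simp only [smul_eq_mul] at hcc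
      have key : c * (t * V qi + (1 - t) * V qj) = ai * V qi + (c - ai) * V qj := by
        linear_combination (V qi - V qj) * hct
      have hsum2 : aj * V qj = (1 - ai) * V qj := by linear_combination V qj * hsum
      have h2 : c * V (t • qi + (1 - t) • qj) ≤ c * (t * V qi + (1 - t) * V qj) := by
        rw [key]; linarith [hcc, hVp', hsum2]
      exact le_of_mul_le_mul_left h2 hc0
    · have h1t : (0:ℝ) < 1 - t := by linarith
      set c := aj / (1 - t) with hc
      have hc0 : 0 < c := div_pos haj h1t
      have hc1 : c ≤ 1 := (div_le_one h1t).mpr (by linarith)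
      have hct : c * (1 - t) = aj := div_mul_cancel₀ aj (ne_of_gt h1t)
      have hpe : c • (t • qi + (1 - t) • qj) + (1 - c) • qi = p := by
        rw [hdecomp]; funext ω
        simp only [Pi.add_apply, Pi.smul_apply, smul_eq_mul]
        linear_combination (qj ω - qi ω) * hct - qi ω * hsum
      have hcc := hVconc.2 hptS hqi hc0.le (by linarith : (0:ℝ) ≤ 1 - c) (by ring)
      rw [hpe] at hcc
      simp only [smul_eq_mul] at hcc
      have key : c * (t * V qi + (1 - t) * V qj) = (c - aj) * V qi + aj * V qj := by
        linear_combination (V qj - V qi) * hct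
      have hsum3 : ai * V qi = (1 - aj) * V qi := by linear_combination V qi * hsum
      have h2 : c * V (t • qi + (1 - t) • qj) ≤ c * (t * V qi + (1 - t) * V qj) := by
        rw [key]; linarith [hcc, hVp', hsum3]
      exact le_of_mul_le_mul_left h2 hc0
  have haff : ∀ t ∈ Icc (0:ℝ) 1,
      V (t • qi + (1 - t) • qj) = t * V qi + (1 - t) * V qj := by
    intro t ht
    refine le_antisymm (hupp t ht.1 ht.2) ?_
    have h := hlow t ht.1 ht.2
    rw [hVqi, hVqj]
    exact h
  refine ⟨haff, ?_⟩
  intro ai' aj' h0i' h0j' hsum'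
  have haj'' : aj' = 1 - ai' := by linarith
  subst haj''
  have hai'1 : ai' ≤ 1 := by linarith
  refine ⟨hmem' ai' h0i' hai'1, ?_⟩
  rw [hpay ai' h0i' hai'1, haff ai' ⟨h0i', hai'1⟩, hVqi, hVqj]

end
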